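/- Let γ be a homeomorphism of a compact metric space Z with exactly two fixed points γ⁺ and γ⁻, such that for every z ∈ Z with z ≠ γ⁻ the iterates γⁿ(z) converge to γ⁺ as n → +∞, and for every z ≠ γ⁺ the iterates γⁿ(z) converge to γ⁻ as n → −∞ (north-south dynamics). Let g be a homeomorphism of S¹ and f : S¹ → Z a continuous surjective map with f ∘ g = γ ∘ f. Then some power gᵏ (k ≥ 1) of g has a fixed point in S¹. -/

import Mathlib

open Set Filter

noncomputable def dd (w : AddCircle (1:ℝ)) : ℝ := (AddCircle.equivIoc 1 (-(1/2)) w : ℝ)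

lemma dd_coe (w : AddCircle (1:ℝ)) : (↑(dd w) : AddCircle (1:ℝ)) = w := by
  conv_rhs => rw [← (AddCircle.equivIoc 1 (-(1/2))).symm_apply_apply w]
  rfl

lemma dd_zero : dd 0 = 0 := by
  have : ((0:ℝ) : AddCircle (1:ℝ)) = 0 := rfl
  rw [dd, ← this]
  show (toIocMod (by norm_num : (0:ℝ) < 1) (-(1/2)) 0) = 0
  rw [toIocMod_eq_self]
  constructor <;> norm_num

lemma dd_contAt {w : AddCircle (1:ℝ)} (hw : w ≠ ↑(-(1/2):ℝ)) : ContinuousAt dd w :=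
  continuous_subtype_val.continuousAt.comp (AddCircle.continuousAt_equivIoc 1 (-(1/2)) hw)

lemma ne_half_of_norm_lt {u : AddCircle (1:ℝ)} (hu : ‖u‖ < 1/2) : u ≠ ↑(-(1/2):ℝ) := by
  intro h
  rw [h, AddCircle.norm_eq] at hu
  rw [show (1:ℝ)⁻¹ * (-(1/2)) = -(1/2) by norm_num, show round (-(1/2) : ℝ) = 0 by
    rw [round_eq]; norm_num] at hu
  norm_num at hu

lemma coe_sub (x y : ℝ) : (↑(x - y) : AddCircle (1:ℝ)) = ↑x - ↑y := rfl

lemma dist_coe_le (x y : ℝ) : dist (↑x : AddCircle (1:ℝ)) ↑y ≤ |x - y| := by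
  rw [dist_eq_norm, ← coe_sub]
  simpa using QuotientAddGroup.norm_mk_le_norm (S := AddSubgroup.zmultiples (1:ℝ)) (m := x - y)

lemma exists_lift (ψ : AddCircle (1:ℝ) → AddCircle (1:ℝ)) (hψ : Continuous ψ) :
    ∃ L : ℝ → ℝ, Continuous L ∧ ∀ x : ℝ, (↑(L x) : AddCircle (1:ℝ)) = ψ ↑x := by
  set φ : ℝ → AddCircle (1:ℝ) := fun x => ψ ↑x with hφ
  have hφc : Continuous φ := hψ.comp continuous_quotient_mk'
  -- uniform continuity
  have hproj : UniformContinuous (fun x : ℝ => (↑x : AddCircle (1:ℝ))) := by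
    refine LipschitzWith.uniformContinuous (K := 1) ?_
    refine LipschitzWith.of_dist_le_mul fun x y => ?_
    simpa [Real.dist_eq] using dist_coe_le x y
  have hUC : UniformContinuous φ :=
    (CompactSpace.uniformContinuous_of_continuous hψ).comp hproj
  rw [Metric.uniformContinuous_iff] at hUC
  obtain ⟨δ, hδ, hδ2⟩ := hUC (1/2) (by norm_num)
  set h : ℝ := δ/2 with hh
  have hh0 : 0 < h := by positivity
  have key : ∀ s t : ℝ, |s - t| ≤ h → dist (φ s) (φ t) < 1/2 := fun s t hst =>
    hδ2 (by rw [Real.dist_eq]; linarith)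
  -- terms
  set tP : ℕ → ℝ → ℝ := fun i x => dd (φ (min ((i+1)*h) x) - φ (min (i*h) x)) with htP
  set tN : ℕ → ℝ → ℝ := fun i x => dd (φ (max (-(i*h)) x) - φ (max (-((i+1)*h)) x)) with htN
  have hminabs : ∀ (a b x : ℝ), a ≤ b → b - a ≤ h → |min b x - min a x| ≤ h := by
    intro a b x h1 h2
    rw [abs_le]
    have k1 : min a x ≤ min b x := min_le_min h1 le_rfl
    have k2 : min b x ≤ min (a + h) (x + h) := min_le_min (by linarith) (by linarith)
    have k3 : min (a + h) (x + h) = min a x + h := min_add_add_right a x h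
    constructor <;> linarith
  have hmaxabs : ∀ (a b x : ℝ), a ≤ b → b - a ≤ h → |max b x - max a x| ≤ h := by
    intro a b x h1 h2
    rw [abs_le]
    have k1 : max a x ≤ max b x := max_le_max h1 le_rfl
    have k2 : max b x ≤ max (a + h) (x + h) := max_le_max (by linarith) (by linarith)
    have k3 : max (a + h) (x + h) = max a x + h := max_add_add_right a x h
    constructor <;> linarith
  have htPc : ∀ i x, ContinuousAt (tP i) x := by
    intro i x
    have hc : Continuous (fun x => φ (min ((i+1)*h) x) - φ (min (i*h) x)) :=
      ((hφc.comp (continuous_const.min continuous_id)).sub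
        (hφc.comp (continuous_const.min continuous_id)))
    have hne : φ (min ((i+1)*h) x) - φ (min (i*h) x) ≠ ↑(-(1/2):ℝ) := by
      refine ne_half_of_norm_lt ?_
      have : dist (φ (min ((i+1)*h) x)) (φ (min (i*h) x)) < 1/2 :=
        key _ _ (hminabs (i*h) ((i+1)*h) x (by nlinarith [hh0, Nat.cast_nonneg (α := ℝ) i]) (le_of_eq (by ring)))
      rwa [dist_eq_norm] at this
    exact ContinuousAt.comp (g := dd) (dd_contAt hne) hc.continuousAt
  have htNc : ∀ i x, ContinuousAt (tN i) x := by
    intro i x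
    have hc : Continuous (fun x => φ (max (-(i*h)) x) - φ (max (-((i+1)*h)) x)) :=
      ((hφc.comp (continuous_const.max continuous_id)).sub
        (hφc.comp (continuous_const.max continuous_id)))
    have hne : φ (max (-(i*h)) x) - φ (max (-((i+1)*h)) x) ≠ ↑(-(1/2):ℝ) := by
      refine ne_half_of_norm_lt ?_
      have : dist (φ (max (-(i*h)) x)) (φ (max (-((i+1)*h)) x)) < 1/2 :=
        key _ _ (hmaxabs (-((i+1)*h)) (-(i*h)) x (by nlinarith [hh0, Nat.cast_nonneg (α := ℝ) i]) (le_of_eq (by ring)))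
      rwa [dist_eq_norm] at this
    exact ContinuousAt.comp (g := dd) (dd_contAt hne) hc.continuousAt
  have htPcont : ∀ i, Continuous (tP i) := fun i => continuous_iff_continuousAt.mpr (htPc i)
  have htNcont : ∀ i, Continuous (tN i) := fun i => continuous_iff_continuousAt.mpr (htNc i)
  -- vanishing of terms
  have htP0 : ∀ (i : ℕ) (x : ℝ), |x| ≤ (i:ℝ)*h → tP i x = 0 := by
    intro i x hx
    have h1 : min ((i+1)*h) x = x := min_eq_right (by
      have := le_abs_self x
      nlinarith)
    have h2 : min ((i:ℝ)*h) x = x := min_eq_right (by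
      have := le_abs_self x; linarith)
    rw [htP]; simp only [h1, h2, sub_self, dd_zero]
  have htN0 : ∀ (i : ℕ) (x : ℝ), |x| ≤ (i:ℝ)*h → tN i x = 0 := by
    intro i x hx
    have := neg_abs_le x
    have h1 : max (-((i:ℝ)*h)) x = x := max_eq_right (by linarith)
    have h2 : max (-((i+1)*h)) x = x := max_eq_right (by nlinarith)
    rw [htN]; simp only [h1, h2, sub_self, dd_zero]
  -- partial sums
  set SP : ℕ → ℝ → ℝ := fun N x => ∑ i ∈ Finset.range N, tP i x with hSP
  set SN : ℕ → ℝ → ℝ := fun N x => ∑ i ∈ Finset.range N, tN i x with hSN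
  have stabP : ∀ (x : ℝ) (N M : ℕ), |x| ≤ N*h → N ≤ M → SP M x = SP N x := by
    intro x N M hxN hNM
    refine (Finset.sum_subset (Finset.range_subset_range.mpr hNM) ?_).symm
    intro i _ hi
    rw [Finset.mem_range, not_lt] at hi
    refine htP0 i x (hxN.trans ?_)
    have : (N:ℝ) ≤ i := Nat.cast_le.mpr hi
    nlinarith
  have stabN : ∀ (x : ℝ) (N M : ℕ), |x| ≤ N*h → N ≤ M → SN M x = SN N x := by
    intro x N M hxN hNM
    refine (Finset.sum_subset (Finset.range_subset_range.mpr hNM) ?_).symm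
    intro i _ hi
    rw [Finset.mem_range, not_lt] at hi
    refine htN0 i x (hxN.trans ?_)
    have : (N:ℝ) ≤ i := Nat.cast_le.mpr hi
    nlinarith
  -- cutoff
  set NNb : ℝ → ℕ := fun r => ⌈r/h⌉₊ + 1 with hNNb
  have hNNbh : ∀ r : ℝ, r ≤ NNb r * h := by
    intro r
    have h1 : r/h ≤ (⌈r/h⌉₊ : ℝ) := Nat.le_ceil _
    have : r / h * h ≤ ((⌈r/h⌉₊ : ℝ)) * h := by nlinarith
    rw [div_mul_cancel₀ _ (ne_of_gt hh0)] at this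
    have : ((⌈r/h⌉₊:ℝ)) * h ≤ ((⌈r/h⌉₊:ℝ) + 1) * h := by nlinarith
    simp only [hNNb]
    push_cast
    nlinarith [Nat.le_ceil (r/h), div_mul_cancel₀ r (ne_of_gt hh0)]
  -- the lift
  set L : ℝ → ℝ := fun x => dd (ψ 0) + SP (NNb |x|) x - SN (NNb |x|) x with hL
  have hLloc : ∀ (x : ℝ) (N : ℕ), |x| ≤ N*h → L x = dd (ψ 0) + SP N x - SN N x := by
    intro x N hxN
    have hx2 : |x| ≤ (NNb |x|) * h := hNNbh _
    have e1 : SP (max N (NNb |x|)) x = SP N x := stabP x N _ hxN (le_max_left _ _)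
    have e2 : SP (max N (NNb |x|)) x = SP (NNb |x|) x := stabP x _ _ hx2 (le_max_right _ _)
    have e3 : SN (max N (NNb |x|)) x = SN N x := stabN x N _ hxN (le_max_left _ _)
    have e4 : SN (max N (NNb |x|)) x = SN (NNb |x|) x := stabN x _ _ hx2 (le_max_right _ _)
    rw [hL]
    simp only []
    rw [← e2, e1, ← e4, e3]
  have hLc : Continuous L := by
    rw [continuous_iff_continuousAt]
    intro x0
    set N0 : ℕ := NNb (|x0| + 1) with hN0
    have hev : (fun x => dd (ψ 0) + SP N0 x - SN N0 x) =ᶠ[nhds x0] L := by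
      filter_upwards [Metric.ball_mem_nhds x0 one_pos] with x hx
      rw [Metric.mem_ball, Real.dist_eq] at hx
      have : |x| ≤ N0 * h := by
        refine le_trans ?_ (hNNbh (|x0| + 1))
        have := abs_sub_abs_le_abs_sub x x0
        linarith
      exact (hLloc x N0 this).symm
    refine ContinuousAt.congr ?_ hev
    refine ContinuousAt.sub (ContinuousAt.add continuousAt_const ?_) ?_
    · exact (continuous_finset_sum _ (fun i _ => htPcont i)).continuousAt
    · exact (continuous_finset_sum _ (fun i _ => htNcont i)).continuousAt
  refine ⟨L, hLc, ?_⟩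
  intro x
  -- lift property
  set N : ℕ := NNb |x| with hN
  have hxN : |x| ≤ N * h := hNNbh _
  have hLx : L x = dd (ψ 0) + SP N x - SN N x := hLloc x N hxN
  have projsum : ∀ (M : ℕ), (↑(SP M x) : AddCircle (1:ℝ)) = φ (min (M*h) x) - φ (min 0 x) := by
    intro M
    have : (↑(SP M x) : AddCircle (1:ℝ))
        = ∑ i ∈ Finset.range M, (↑(tP i x) : AddCircle (1:ℝ)) := by
      rw [hSP]
      exact map_sum (QuotientAddGroup.mk' (AddSubgroup.zmultiples (1:ℝ))) _ _
    rw [this]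
    have : ∀ i, (↑(tP i x) : AddCircle (1:ℝ))
        = φ (min ((i+1)*h) x) - φ (min (i*h) x) := by
      intro i; rw [htP]; exact dd_coe _
    rw [Finset.sum_congr rfl (fun i _ => this i)]
    have := Finset.sum_range_sub (f := fun i : ℕ => φ (min ((i:ℝ)*h) x)) M
    simpa using this
  have projsumN : ∀ (M : ℕ), (↑(SN M x) : AddCircle (1:ℝ)) = φ (max 0 x) - φ (max (-(M*h)) x) := by
    intro M
    have : (↑(SN M x) : AddCircle (1:ℝ))
        = ∑ i ∈ Finset.range M, (↑(tN i x) : AddCircle (1:ℝ)) := by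
      rw [hSN]
      exact map_sum (QuotientAddGroup.mk' (AddSubgroup.zmultiples (1:ℝ))) _ _
    rw [this]
    have : ∀ i, (↑(tN i x) : AddCircle (1:ℝ))
        = φ (max (-(i*h)) x) - φ (max (-((i+1)*h)) x) := by
      intro i; rw [htN]; exact dd_coe _
    rw [Finset.sum_congr rfl (fun i _ => this i)]
    have := Finset.sum_range_sub' (f := fun i : ℕ => φ (max (-((i:ℝ)*h)) x)) M
    simpa using this
  have hmin : min ((N:ℝ)*h) x = x := min_eq_right ((le_abs_self x).trans hxN)
  have hmax : max (-((N:ℝ)*h)) x = x := max_eq_right (by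
    have := neg_abs_le x; linarith)
  have hcoe : (↑(L x) : AddCircle (1:ℝ))
      = ↑(dd (ψ 0)) + ↑(SP N x) - (↑(SN N x) : AddCircle (1:ℝ)) := by
    rw [hLx]; rfl
  rw [hcoe, projsum N, projsumN N, hmin, hmax, dd_coe]
  have h0 : ((0:ℝ) : AddCircle (1:ℝ)) = 0 := rfl
  rcases le_total x 0 with hx | hx
  · rw [min_eq_right hx, max_eq_left hx]
    show ψ 0 + (φ x - φ x) - (φ 0 - φ x) = φ x
    rw [hφ]
    simp only [h0]
    abel
  · rw [min_eq_left hx, max_eq_right hx]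
    show ψ 0 + (φ x - φ 0) - (φ x - φ x) = φ x
    rw [hφ]
    simp only [h0]
    abel

lemma coe_add_int (x : ℝ) (k : ℤ) : ((x + k : ℝ) : AddCircle (1:ℝ)) = ↑x := by
  rw [QuotientAddGroup.eq_iff_sub_mem]
  exact AddSubgroup.mem_zmultiples_iff.mpr ⟨k, by simp⟩

lemma exists_int_of_coe_eq {x y : ℝ} (h : (↑x : AddCircle (1:ℝ)) = ↑y) : ∃ k : ℤ, y = x + k := by
  rw [QuotientAddGroup.eq_iff_sub_mem] at h
  obtain ⟨k, hk⟩ := AddSubgroup.mem_zmultiples_iff.mp h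
  refine ⟨-k, ?_⟩
  have : (k:ℝ) = x - y := by simpa using hk
  push_cast
  linarith

lemma int_const {F : ℝ → ℝ} (hF : Continuous F) (hint : ∀ x : ℝ, ∃ k : ℤ, F x = k)
    (x y : ℝ) : F x = F y := by
  by_contra hne
  obtain ⟨kx, hkx⟩ := hint x
  obtain ⟨ky, hky⟩ := hint y
  have hk : kx ≠ ky := by
    intro h; exact hne (by rw [hkx, hky, h])
  set k0 : ℤ := min kx ky with hk0
  have hmem : ((k0 : ℤ) : ℝ) + 1/2 ∈ Set.uIcc (F x) (F y) := by
    rw [hkx, hky, Set.mem_uIcc]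
    rcases hk.lt_or_gt with h | h
    · left
      rw [hk0, min_eq_left h.le]
      have : (kx:ℝ) + 1 ≤ ky := by exact_mod_cast h
      constructor <;> [skip; skip] <;> push_cast <;> linarith
    · right
      rw [hk0, min_eq_right h.le]
      have : (ky:ℝ) + 1 ≤ kx := by exact_mod_cast h
      constructor <;> [skip; skip] <;> push_cast <;> linarith
  obtain ⟨z, _, hz⟩ := intermediate_value_uIcc (hF.continuousOn) hmem
  obtain ⟨k, hk2⟩ := hint z
  rw [hk2] at hz
  have h2 : ((2*k : ℤ) : ℝ) = ((2 * k0 + 1 : ℤ) : ℝ) := by push_cast; linarith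
  have := Int.cast_injective (α := ℝ) h2
  omega

lemma homeo_image_componentIn (e : ℝ ≃ₜ ℝ) {V : Set ℝ} (hV : ∀ x, e x ∈ V ↔ x ∈ V)
    {x : ℝ} (hx : x ∈ V) :
    e '' connectedComponentIn V x = connectedComponentIn V (e x) := by
  apply subset_antisymm
  · refine IsPreconnected.subset_connectedComponentIn
      (isPreconnected_connectedComponentIn.image _ e.continuous.continuousOn)
      ⟨x, mem_connectedComponentIn hx, rfl⟩ ?_
    rintro _ ⟨y, hy, rfl⟩
    exact (hV y).mpr (connectedComponentIn_subset _ _ hy)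
  · intro z hz
    have h2 : e.symm '' connectedComponentIn V (e x) ⊆ connectedComponentIn V x := by
      refine IsPreconnected.subset_connectedComponentIn
        (isPreconnected_connectedComponentIn.image _ e.symm.continuous.continuousOn)
        ⟨e x, mem_connectedComponentIn ((hV x).mpr hx), by simp⟩ ?_
      rintro _ ⟨y, hy, rfl⟩
      have hyV : y ∈ V := connectedComponentIn_subset _ _ hy
      have := hV (e.symm y)
      rw [e.apply_symm_apply] at this
      exact this.mp hyV
    have : e.symm z ∈ connectedComponentIn V x := h2 ⟨z, hz, rfl⟩
    exact ⟨e.symm z, this, e.apply_symm_apply z⟩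

lemma component_structure {V : Set ℝ} (hVo : IsOpen V) {x : ℝ} (hx : x ∈ V)
    (hA : BddAbove (connectedComponentIn V x)) (hB : BddBelow (connectedComponentIn V x)) :
    sInf (connectedComponentIn V x) ∉ V ∧ sSup (connectedComponentIn V x) ∉ V ∧
    connectedComponentIn V x = Set.Ioo (sInf (connectedComponentIn V x))
      (sSup (connectedComponentIn V x)) := by
  set C := connectedComponentIn V x with hC
  have hne : C.Nonempty := ⟨x, mem_connectedComponentIn hx⟩
  have hCsub : C ⊆ V := connectedComponentIn_subset _ _
  have hCopen : IsOpen C := hVo.connectedComponentIn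
  have hCord : Set.OrdConnected C := isPreconnected_connectedComponentIn.ordConnected
  set a := sInf C
  set b := sSup C
  have haC : a ∉ C := by
    intro haC
    obtain ⟨ε, hε, hball⟩ := Metric.isOpen_iff.mp hCopen a haC
    have : a - ε/2 ∈ C := hball (by rw [Metric.mem_ball, Real.dist_eq]; rw [abs_of_nonpos] <;> linarith)
    have := csInf_le hB this
    linarith
  have hbC : b ∉ C := by
    intro hbC
    obtain ⟨ε, hε, hball⟩ := Metric.isOpen_iff.mp hCopen b hbC
    have : b + ε/2 ∈ C := hball (by rw [Metric.mem_ball, Real.dist_eq]; rw [abs_of_nonneg] <;> linarith)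
    have := le_csSup hA this
    linarith
  have hIoo : C = Set.Ioo a b := by
    apply subset_antisymm
    · intro z hz
      have h1 : a ≤ z := csInf_le hB hz
      have h2 : z ≤ b := le_csSup hA hz
      refine ⟨h1.lt_of_ne ?_, h2.lt_of_ne ?_⟩
      · intro h; exact haC (h ▸ hz)
      · intro h; exact hbC (h ▸ hz)
    · intro t ht
      obtain ⟨c1, hc1, hc1t⟩ := exists_lt_of_csInf_lt hne ht.1
      obtain ⟨c2, hc2, hc2t⟩ := exists_lt_of_lt_csSup hne ht.2
      exact hCord.out' hc1 hc2 ⟨hc1t.le, hc2t.le⟩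
  have hxmem : x ∈ C := mem_connectedComponentIn hx
  have hab : a < b := by
    rw [hIoo] at hxmem; exact hxmem.1.trans hxmem.2
  have haV : a ∉ V := by
    intro haV
    have haCl : a ∈ closure C := by
      rw [hIoo]
      rw [closure_Ioo hab.ne]
      exact ⟨le_refl a, hab.le⟩
    have hopen : IsOpen (connectedComponentIn V a) := hVo.connectedComponentIn
    obtain ⟨ε, hε, hball⟩ := Metric.isOpen_iff.mp hopen a (mem_connectedComponentIn haV)
    set t := min (a + ε/2) ((a+b)/2) with hts
    have htC : t ∈ C := by
      rw [hIoo]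
      constructor
      · rw [hts]; apply lt_min <;> linarith
      · rw [hts]
        exact (min_le_right _ _).trans_lt (by linarith)
    have htball : t ∈ connectedComponentIn V a := by
      apply hball
      rw [Metric.mem_ball, Real.dist_eq, abs_of_nonneg]
      · have : t ≤ a + ε/2 := min_le_left _ _
        linarith
      · have : a < t := by rw [hts]; apply lt_min <;> linarith
        linarith
    have e1 := connectedComponentIn_eq htball
    have htC2 : t ∈ connectedComponentIn V x := htC
    have e2 := connectedComponentIn_eq htC2
    have heq : connectedComponentIn V a = C := by rw [e1, hC, e2]
    exact haC (heq ▸ mem_connectedComponentIn haV)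
  have hbV : b ∉ V := by
    intro hbV
    have hopen : IsOpen (connectedComponentIn V b) := hVo.connectedComponentIn
    obtain ⟨ε, hε, hball⟩ := Metric.isOpen_iff.mp hopen b (mem_connectedComponentIn hbV)
    set t := max (b - ε/2) ((a+b)/2) with hts
    have htC : t ∈ C := by
      rw [hIoo]
      constructor
      · rw [hts]
        exact lt_of_lt_of_le (by linarith) (le_max_right _ _)
      · rw [hts]; apply max_lt <;> linarith
    have htball : t ∈ connectedComponentIn V b := by
      apply hball
      rw [Metric.mem_ball, Real.dist_eq, abs_of_nonpos]
      · have : b - ε/2 ≤ t := le_max_left _ _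
        linarith
      · have : t < b := by rw [hts]; apply max_lt <;> linarith
        linarith
    have e1 := connectedComponentIn_eq htball
    have htC2 : t ∈ connectedComponentIn V x := htC
    have e2 := connectedComponentIn_eq htC2
    have heq : connectedComponentIn V b = C := by rw [e1, hC, e2]
    exact hbC (heq ▸ mem_connectedComponentIn hbV)
  exact ⟨haV, hbV, hIoo⟩


/-- If a circle homeomorphism `g` is semiconjugate, via a continuous
surjection `f`, to a homeomorphism `γ` of a compact metric space with
north-south dynamics, then some positive power of `g` has a fixed point. -/
theorem stmt_1 {Z : Type*} [MetricSpace Z] [CompactSpace Z]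
    (γ : Z ≃ₜ Z) (γp γm : Z) (hne : γp ≠ γm)
    (hfix : {z : Z | γ z = z} = {γp, γm})
    (hattr : ∀ z : Z, z ≠ γm →
      Filter.Tendsto (fun n : ℕ => (⇑γ)^[n] z) Filter.atTop (nhds γp))
    (hrep : ∀ z : Z, z ≠ γp →
      Filter.Tendsto (fun n : ℕ => (⇑γ.symm)^[n] z) Filter.atTop (nhds γm))
    (g : AddCircle (1 : ℝ) ≃ₜ AddCircle (1 : ℝ))
    (f : AddCircle (1 : ℝ) → Z) (hf : Continuous f) (hsurj : Function.Surjective f)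
    (hsemi : ∀ p : AddCircle (1 : ℝ), f (g p) = γ (f p)) :
    ∃ k : ℕ, 1 ≤ k ∧ ∃ p : AddCircle (1 : ℝ), (⇑g)^[k] p = p := by
  classical
  have hγp : γ γp = γp := by
    have h1 : γp ∈ ({γp, γm} : Set Z) := Set.mem_insert _ _
    rw [← hfix] at h1; exact h1
  have hγm : γ γm = γm := by
    have h1 : γm ∈ ({γp, γm} : Set Z) := Set.mem_insert_of_mem _ rfl
    rw [← hfix] at h1; exact h1
  obtain ⟨L, hLc, hL⟩ := exists_lift ⇑g g.continuous
  obtain ⟨M, hMc, hM⟩ := exists_lift ⇑g.symm g.symm.continuous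
  have hLM : ∀ x : ℝ, (↑(L (M x)) : AddCircle (1:ℝ)) = ↑x := by
    intro x; rw [hL (M x), hM x]; exact g.apply_symm_apply _
  -- degree
  have hdd : ∀ x : ℝ, ∃ k : ℤ, L (x+1) - L x = k := by
    intro x
    have h1 : (↑(L (x+1)) : AddCircle (1:ℝ)) = ↑(L x) := by
      rw [hL, hL]
      congr 1
      simpa using coe_add_int x 1
    obtain ⟨k, hk⟩ := exists_int_of_coe_eq h1
    exact ⟨-k, by rw [hk]; push_cast; ring⟩
  have hFc : Continuous (fun x : ℝ => L (x+1) - L x) :=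
    (hLc.comp (continuous_id.add continuous_const)).sub hLc
  obtain ⟨d, hd0⟩ := hdd 0
  have hdall : ∀ x : ℝ, L (x+1) = L x + (d:ℝ) := by
    intro x
    have h1 := int_const hFc hdd x 0
    linarith [h1, hd0]
  by_cases hd1 : d = 1
  case neg =>
    -- degree ≠ 1 : g itself has a fixed point
    set H : ℝ → ℝ := fun x => L x - x with hH
    have hHc : Continuous H := hLc.sub continuous_id
    have hH1 : H 1 = H 0 + ((d:ℝ) - 1) := by
      simp only [hH]
      have := hdall 0
      rw [zero_add] at this
      rw [this]; ring
    have habs1 : (1:ℝ) ≤ |(d:ℝ) - 1| := by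
      have : d - 1 ≠ 0 := sub_ne_zero.mpr hd1
      have h1 : (1:ℤ) ≤ |d - 1| := Int.one_le_abs this
      calc (1:ℝ) = ((1:ℤ):ℝ) := by norm_num
        _ ≤ ((|d-1| : ℤ) : ℝ) := by exact_mod_cast h1
        _ = |(d:ℝ) - 1| := by push_cast; ring_nf
    set m : ℤ := ⌈min (H 0) (H 1)⌉ with hm
    have hmmem : (m:ℝ) ∈ Set.uIcc (H 0) (H 1) := by
      rw [Set.mem_uIcc]
      have hceil1 : min (H 0) (H 1) ≤ (m:ℝ) := Int.le_ceil _
      have hceil2 : (m:ℝ) < min (H 0) (H 1) + 1 := Int.ceil_lt_add_one _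
      have hgap : min (H 0) (H 1) + 1 ≤ max (H 0) (H 1) := by
        rcases le_total (H 0) (H 1) with h | h
        · rw [min_eq_left h, max_eq_right h]
          rw [hH1] at *
          rcases abs_cases ((d:ℝ) - 1) with ⟨he, _⟩ | ⟨he, hneg⟩
          · linarith
          · linarith [hH1, h]
        · rw [min_eq_right h, max_eq_left h]
          rcases abs_cases ((d:ℝ) - 1) with ⟨he, _⟩ | ⟨he, hneg⟩
          · linarith [hH1, h]
          · linarith [hH1]
      rcases le_total (H 0) (H 1) with h | h
      · left
        rw [min_eq_left h] at hceil1 hgap hceil2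
        rw [max_eq_right h] at hgap
        exact ⟨by linarith, by linarith⟩
      · right
        rw [min_eq_right h] at hceil1 hgap hceil2
        rw [max_eq_left h] at hgap
        exact ⟨by linarith, by linarith⟩
    obtain ⟨z, _, hz⟩ := intermediate_value_uIcc (a := (0:ℝ)) (b := 1) hHc.continuousOn hmmem
    have hzL : L z = z + m := by
      simp only [hH] at hz
      linarith [hz]
    refine ⟨1, le_refl 1, ↑z, ?_⟩
    rw [Function.iterate_one]
    show g ↑z = ↑z
    rw [← hL z, hzL, coe_add_int]
  case pos =>
    subst hd1
    have hone : ∀ x : ℝ, L (x + 1) = L x + 1 := by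
      intro x; have := hdall x; push_cast at this; exact this
    have hint2 : ∀ (x : ℝ) (k : ℤ), L (x + k) = L x + k := by
      intro x k
      induction k using Int.induction_on with
      | zero => simp
      | succ n ih =>
        have h1 : x + ((n:ℤ) + 1 : ℤ) = (x + (n:ℤ)) + 1 := by push_cast; ring
        rw [h1, hone, ih]; push_cast; ring
      | pred n ih =>
        have h1 : (x + (-(n:ℤ) - 1 : ℤ)) + 1 = x + (-(n:ℤ) : ℤ) := by push_cast; ring
        have h2 := hone (x + (-(n:ℤ) - 1 : ℤ))
        rw [h1, ih] at h2
        push_cast at h2 ⊢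
        linarith
    have hinj : Function.Injective L := by
      intro u v huv
      have h1 : (g ↑u : AddCircle (1:ℝ)) = g ↑v := by rw [← hL, ← hL, huv]
      obtain ⟨k, hk⟩ := exists_int_of_coe_eq (g.injective h1)
      have h2 : L v = L u + k := by rw [hk, hint2]
      have hk0 : (k:ℝ) = 0 := by rw [huv] at h2; linarith
      rw [hk, hk0, add_zero]
    have hmono : StrictMono L := by
      refine Continuous.strictMonoOn_of_inj_rigidity hLc hinj zero_lt_one ?_
      refine ContinuousOn.strictMonoOn_of_injOn_Icc zero_le_one ?_ hLc.continuousOn hinj.injOn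
      have := hone 0
      rw [zero_add] at this
      linarith
    -- surjectivity
    have hddM : ∀ x : ℝ, ∃ k : ℤ, L (M x) - x = k := by
      intro x
      obtain ⟨k, hk⟩ := exists_int_of_coe_eq (hLM x)
      exact ⟨-k, by push_cast; linarith [hk]⟩
    obtain ⟨c, hc0⟩ := hddM 0
    have hcall : ∀ x : ℝ, L (M x) = x + c := by
      intro x
      have hFc2 : Continuous (fun x => L (M x) - x) := (hLc.comp hMc).sub continuous_id
      have h1 := int_const hFc2 hddM x 0
      linarith [h1, hc0]
    have hLsurj : Function.Surjective L := fun y => ⟨M (y - c), by rw [hcall]; ring⟩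
    set E : ℝ ≃o ℝ := StrictMono.orderIsoOfSurjective L hmono hLsurj with hE
    have hEapp : ∀ x, E x = L x := fun _ => rfl
    set Es : ℝ → ℝ := ⇑E.symm with hEs
    have hLEs : ∀ x, L (Es x) = x := fun x => E.apply_symm_apply x
    have hEsL : ∀ x, Es (L x) = x := fun x => E.symm_apply_apply x
    have hEsmono : StrictMono Es := E.symm.strictMono
    set EsH : ℝ ≃ₜ ℝ := (OrderIso.toHomeomorph E).symm with hEsH
    have hEsHapp : ∀ x, EsH x = Es x := fun _ => rfl
    have hEsint : ∀ (x : ℝ) (k : ℤ), Es (x + k) = Es x + k := by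
      intro x k
      apply hinj
      rw [hLEs, hint2, hLEs]
    -- projection facts
    have hproj_Es : ∀ x : ℝ, (↑(Es x) : AddCircle (1:ℝ)) = g.symm ↑x := by
      intro x
      apply g.injective
      rw [← hL (Es x), hLEs]
      exact (g.apply_symm_apply _).symm
    have hfsymm : ∀ p : AddCircle (1:ℝ), f (g.symm p) = γ.symm (f p) := by
      intro p
      apply γ.injective
      rw [← hsemi (g.symm p), g.apply_symm_apply, γ.apply_symm_apply]
    -- invariant set
    set V : Set ℝ := {x : ℝ | f ↑x ≠ γp} with hV
    have hfproj : Continuous fun x : ℝ => f (↑x : AddCircle (1:ℝ)) :=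
      hf.comp continuous_quotient_mk'
    have hVopen : IsOpen V := by
      have : V = (fun x : ℝ => f ↑x) ⁻¹' ({γp}ᶜ) := rfl
      rw [this]
      exact isOpen_compl_singleton.preimage hfproj
    have hγinj : ∀ z, γ z = γp ↔ z = γp :=
      fun z => ⟨fun h => γ.injective (h.trans hγp.symm), fun h => h ▸ hγp⟩
    have hVL : ∀ x : ℝ, L x ∈ V ↔ x ∈ V := by
      intro x
      simp only [hV, Set.mem_setOf_eq]
      rw [hL x, hsemi]
      exact not_congr (hγinj _)
    have hVEs : ∀ x : ℝ, Es x ∈ V ↔ x ∈ V := by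
      intro x
      conv_rhs => rw [← hLEs x]
      exact (hVL (Es x)).symm
    have hVint : ∀ (x : ℝ) (k : ℤ), x + (k:ℝ) ∈ V ↔ x ∈ V := by
      intro x k
      simp only [hV, Set.mem_setOf_eq]
      rw [coe_add_int]
    -- base point with image γm
    obtain ⟨q, hq⟩ := hsurj γm
    obtain ⟨x0, hx0⟩ : ∃ x0 : ℝ, (↑x0 : AddCircle (1:ℝ)) = q := Quotient.exists_rep q
    have hx0V : x0 ∈ V := by
      simp only [hV, Set.mem_setOf_eq, hx0, hq]
      exact fun h => hne h.symm
    -- a point not in V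
    obtain ⟨P, hP⟩ := hsurj γp
    obtain ⟨y0, hy0⟩ : ∃ y0 : ℝ, (↑y0 : AddCircle (1:ℝ)) = P := Quotient.exists_rep P
    have hy0V : ∀ k : ℤ, y0 + (k:ℝ) ∉ V := by
      intro k
      rw [hVint]
      simp only [hV, Set.mem_setOf_eq, hy0, hP, not_not, not_ne_iff]
    -- the component
    set C : Set ℝ := connectedComponentIn V x0 with hC
    have hCx0 : x0 ∈ C := mem_connectedComponentIn hx0V
    have hCsub : C ⊆ V := connectedComponentIn_subset _ _
    have hCord : Set.OrdConnected C := isPreconnected_connectedComponentIn.ordConnected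
    have hbddA : BddAbove C := by
      refine ⟨y0 + ((⌈x0 - y0⌉ + 1 : ℤ) : ℝ), fun t ht => ?_⟩
      by_contra hlt
      push_neg at hlt
      have hz1 : x0 ≤ y0 + ((⌈x0 - y0⌉ + 1 : ℤ) : ℝ) := by
        have := Int.le_ceil (x0 - y0)
        push_cast
        linarith
      have : y0 + ((⌈x0 - y0⌉ + 1 : ℤ) : ℝ) ∈ C :=
        hCord.out' hCx0 ht ⟨hz1, hlt.le⟩
      exact hy0V _ (hCsub this)
    have hbddB : BddBelow C := by
      refine ⟨y0 + ((-⌈y0 - x0⌉ - 1 : ℤ) : ℝ), fun t ht => ?_⟩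
      by_contra hlt
      push_neg at hlt
      have hz1 : y0 + ((-⌈y0 - x0⌉ - 1 : ℤ) : ℝ) ≤ x0 := by
        have := Int.le_ceil (y0 - x0)
        push_cast
        linarith
      have : y0 + ((-⌈y0 - x0⌉ - 1 : ℤ) : ℝ) ∈ C :=
        hCord.out' ht hCx0 ⟨hlt.le, hz1⟩
      exact hy0V _ (hCsub this)
    obtain ⟨haV, hbV, hIoo⟩ := component_structure hVopen hx0V hbddA hbddB
    set a : ℝ := sInf C with ha
    set b : ℝ := sSup C with hb
    have hx0ab : x0 ∈ Set.Ioo a b := by rw [← hIoo]; exact hCx0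
    have hab : a < b := hx0ab.1.trans hx0ab.2
    -- iterate lemmas
    have hEsiterV : ∀ (n : ℕ) (x : ℝ), Es^[n] x ∈ V ↔ x ∈ V := by
      intro n
      induction n with
      | zero => simp
      | succ n ih =>
        intro x
        rw [Function.iterate_succ_apply', hVEs, ih]
    have hLiter : ∀ (n : ℕ) (x : ℝ), (↑(L^[n] x) : AddCircle (1:ℝ)) = (⇑g)^[n] ↑x := by
      intro n
      induction n with
      | zero => simp
      | succ n ih =>
        intro x
        rw [Function.iterate_succ_apply', Function.iterate_succ_apply', hL, ih]
    have hLiterint : ∀ (j : ℕ) (x : ℝ) (m : ℤ), L^[j] (x + m) = L^[j] x + m := by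
      intro j
      induction j with
      | zero => simp
      | succ j ih =>
        intro x m
        rw [Function.iterate_succ_apply, Function.iterate_succ_apply, hint2, ih]
    have hLEsiter : ∀ (j : ℕ) (y : ℝ), L^[j] (Es^[j] y) = y := by
      intro j
      induction j with
      | zero => simp
      | succ j ih =>
        intro y
        rw [Function.iterate_succ_apply' Es, Function.iterate_succ_apply L, hLEs, ih]
    -- the family of components
    have hcompn : ∀ n : ℕ, connectedComponentIn V (Es^[n] x0)
        = Set.Ioo (Es^[n] a) (Es^[n] b) := by
      intro n
      induction n with
      | zero => simpa using hIoo
      | succ n ih =>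
        rw [Function.iterate_succ_apply' Es, Function.iterate_succ_apply' Es,
          Function.iterate_succ_apply' Es]
        have himg := homeo_image_componentIn EsH (fun x => by rw [hEsHapp]; exact hVEs x)
          ((hEsiterV n x0).mpr hx0V)
        have : EsH (Es^[n] x0) = Es (Es^[n] x0) := rfl
        rw [this] at himg
        rw [← himg, ih]
        have himgIoo : EsH '' Set.Ioo (Es^[n] a) (Es^[n] b)
            = Set.Ioo (Es (Es^[n] a)) (Es (Es^[n] b)) := by
          have := OrderIso.image_Ioo E.symm (Es^[n] a) (Es^[n] b)
          exact this
        exact himgIoo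
    have hcompnm : ∀ (n : ℕ) (m : ℤ), connectedComponentIn V (Es^[n] x0 + (m:ℝ))
        = Set.Ioo (Es^[n] a + (m:ℝ)) (Es^[n] b + (m:ℝ)) := by
      intro n m
      have himg := homeo_image_componentIn (Homeomorph.addRight ((m:ℤ):ℝ))
        (fun x => hVint x m) ((hEsiterV n x0).mpr hx0V)
      have happ : (Homeomorph.addRight ((m:ℤ):ℝ)) (Es^[n] x0) = Es^[n] x0 + (m:ℝ) := rfl
      rw [happ] at himg
      rw [← himg, hcompn n]
      exact Set.image_add_const_Ioo _ _ _
    -- abbreviations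
    set u : ℕ → ℝ := fun n => Es^[n] a with hu
    set v : ℕ → ℝ := fun n => Es^[n] b with hv
    have habn : ∀ j : ℕ, u j < v j := fun j => (hEsmono.iterate j) hab
    by_cases hX : ∃ (n n' : ℕ) (m m' : ℤ), (n, m) ≠ (n', m') ∧
        (Set.Ioo (u n + (m:ℝ)) (v n + (m:ℝ)) ∩
         Set.Ioo (u n' + (m':ℝ)) (v n' + (m':ℝ))).Nonempty
    · -- some component returns to itself: periodic point
      obtain ⟨n, n', m, m', hpne, t, ht1, ht2⟩ := hX
      have hmem1 : t ∈ connectedComponentIn V (Es^[n] x0 + (m:ℝ)) := by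
        rw [hcompnm]; exact ht1
      have hmem2 : t ∈ connectedComponentIn V (Es^[n'] x0 + (m':ℝ)) := by
        rw [hcompnm]; exact ht2
      have hcompeq : connectedComponentIn V (Es^[n] x0 + (m:ℝ))
          = connectedComponentIn V (Es^[n'] x0 + (m':ℝ)) := by
        rw [connectedComponentIn_eq hmem1, connectedComponentIn_eq hmem2]
      have hIooeq : Set.Ioo (u n + (m:ℝ)) (v n + (m:ℝ))
          = Set.Ioo (u n' + (m':ℝ)) (v n' + (m':ℝ)) := by
        rw [← hcompnm n m, ← hcompnm n' m', hcompeq]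
      have hendpt : u n + (m:ℝ) = u n' + (m':ℝ) := by
        have h1 := csInf_Ioo (by linarith [habn n] : u n + (m:ℝ) < v n + (m:ℝ))
        have h2 := csInf_Ioo (by linarith [habn n'] : u n' + (m':ℝ) < v n' + (m':ℝ))
        rw [← h1, ← h2, hIooeq]
      have hreduce : ∀ (n n' : ℕ) (m m' : ℤ), n' ≤ n → (n, m) ≠ (n', m') →
          Es^[n] a + (m:ℝ) = Es^[n'] a + (m':ℝ) →
          ∃ k : ℕ, 1 ≤ k ∧ ∃ j : ℤ, L^[k] a = a + (j:ℝ) := by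
        intro n n' m m' hle hpne2 heq
        set k := n - n' with hk
        have hnk : n' + k = n := Nat.add_sub_cancel' hle
        have hsplit : Es^[n] a = Es^[n'] (Es^[k] a) := by
          rw [← hnk, Function.iterate_add_apply]
        have happly : L^[n'] (Es^[n'] (Es^[k] a) + (m:ℝ)) = L^[n'] (Es^[n'] a + (m':ℝ)) := by
          rw [← hsplit, heq]
        rw [hLiterint, hLiterint, hLEsiter, hLEsiter] at happly
        have hkpos : k ≠ 0 := by
          intro h0
          rw [h0, Function.iterate_zero_apply] at happly
          have hmm : m = m' := by
            have : (m:ℝ) = (m':ℝ) := by linarith [happly]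
            exact_mod_cast this
          have hnn : n = n' := by omega
          exact hpne2 (by rw [hmm, hnn])
        have hfin : L^[k] a = a + ((m - m' : ℤ):ℝ) := by
          have h1 : L^[k] (Es^[k] a + (m:ℝ)) = L^[k] (a + (m':ℝ)) := by rw [happly]
          rw [hLiterint, hLiterint, hLEsiter] at h1
          push_cast
          linarith [h1]
        exact ⟨k, Nat.one_le_iff_ne_zero.mpr hkpos, m - m', hfin⟩
      have hfinal : ∃ k : ℕ, 1 ≤ k ∧ ∃ j : ℤ, L^[k] a = a + (j:ℝ) := by
        rcases le_total n' n with h | h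
        · exact hreduce n n' m m' h hpne hendpt
        · refine hreduce n' n m' m h ?_ hendpt.symm
          intro h2
          exact hpne (by rw [Prod.ext_iff] at h2 ⊢; exact ⟨h2.1.symm, h2.2.symm⟩)
      obtain ⟨k, hk1, j, hkj⟩ := hfinal
      refine ⟨k, hk1, ↑a, ?_⟩
      rw [← hLiter k a, hkj, coe_add_int]
    · -- all translated components disjoint: derive a contradiction
      set ℓ : ℕ → ℝ := fun n => v n - u n with hℓ
      have hℓpos : ∀ n, 0 < ℓ n := fun n => sub_pos.mpr (habn n)
      have hdisj : ∀ (n n' : ℕ) (m m' : ℤ), (n, m) ≠ (n', m') →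
          (Set.Ioo (u n + (m:ℝ)) (v n + (m:ℝ)) ∩
           Set.Ioo (u n' + (m':ℝ)) (v n' + (m':ℝ))) = ∅ := by
        intro n n' m m' hne2
        rw [← Set.not_nonempty_iff_eq_empty]
        intro hnon
        exact hX ⟨n, n', m, m', hne2, hnon⟩
      have hℓ1 : ∀ n, ℓ n ≤ 1 := by
        intro n
        by_contra hgt
        push_neg at hgt
        simp only [hℓ] at hgt
        have hd := hdisj n n 0 1 (by simp)
        have hmem : (u n + 1 + v n)/2 ∈
            Set.Ioo (u n + ((0:ℤ):ℝ)) (v n + ((0:ℤ):ℝ)) ∩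
            Set.Ioo (u n + ((1:ℤ):ℝ)) (v n + ((1:ℤ):ℝ)) := by
          refine ⟨⟨?_, ?_⟩, ?_, ?_⟩ <;> push_cast <;> linarith [habn n]
        rw [hd] at hmem
        exact hmem
      have hsumbound : ∀ N : ℕ, ∑ n ∈ Finset.range N, ℓ n ≤ 3 := by
        intro N
        set msh : ℕ → ℤ := fun n => -⌊u n⌋ with hmsh
        set J : ℕ → Set ℝ := fun n => Set.Ioo (u n + (msh n : ℝ)) (v n + (msh n : ℝ)) with hJ
        have hJsub : ∀ n, J n ⊆ Set.Ioo (-1 : ℝ) 2 := by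
          intro n t ht
          have hf1 := Int.floor_le (u n)
          have hf2 := Int.lt_floor_add_one (u n)
          have h1 : (0:ℝ) ≤ u n + (msh n : ℝ) := by
            simp only [hmsh]; push_cast; linarith
          have h2 : u n + (msh n:ℝ) < 1 := by
            simp only [hmsh]; push_cast; linarith
          have hln := hℓ1 n
          simp only [hℓ] at hln
          exact ⟨by linarith [ht.1], by linarith [ht.2]⟩
        have hpd : (↑(Finset.range N) : Set ℕ).PairwiseDisjoint J := by
          intro i _ j _ hij
          rw [Function.onFun, Set.disjoint_iff_inter_eq_empty]
          refine hdisj i j (msh i) (msh j) ?_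
          intro h2
          exact hij (congrArg Prod.fst h2)
        have hvol := MeasureTheory.measure_biUnion_finset (μ := MeasureTheory.volume) hpd
          (fun n _ => measurableSet_Ioo (a := u n + (msh n : ℝ)) (b := v n + (msh n : ℝ)))
        have hvol2 : ∑ n ∈ Finset.range N, MeasureTheory.volume (J n)
            ≤ ENNReal.ofReal 3 := by
          rw [← hvol]
          have hsub : (⋃ n ∈ Finset.range N, J n) ⊆ Set.Ioo (-1:ℝ) 2 :=
            Set.iUnion₂_subset fun n _ => hJsub n
          have hmono := MeasureTheory.measure_mono (μ := MeasureTheory.volume) hsub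
          refine hmono.trans ?_
          rw [Real.volume_Ioo]
          norm_num
        have hJvol : ∀ n, MeasureTheory.volume (J n) = ENNReal.ofReal (ℓ n) := by
          intro n
          simp only [hJ]
          rw [Real.volume_Ioo]
          congr 1
          simp only [hℓ]
          ring
        rw [Finset.sum_congr rfl (fun n _ => hJvol n)] at hvol2
        rw [← ENNReal.ofReal_sum_of_nonneg (fun n _ => (hℓpos n).le)] at hvol2
        exact (ENNReal.ofReal_le_ofReal_iff (by norm_num)).mp hvol2
      have hsummable : Summable ℓ := summable_of_sum_range_le (fun n => (hℓpos n).le) hsumbound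
      have hℓ0 : Filter.Tendsto ℓ Filter.atTop (nhds 0) := hsummable.tendsto_atTop_zero
      -- endgame
      have hd0 : 0 < dist γm γp := dist_pos.mpr (fun h => hne h.symm)
      have hfUC := CompactSpace.uniformContinuous_of_continuous hf
      rw [Metric.uniformContinuous_iff] at hfUC
      obtain ⟨δ2, hδ2, hδ2p⟩ := hfUC (dist γm γp) hd0
      obtain ⟨n, hn⟩ := (hℓ0.eventually (gt_mem_nhds hδ2)).exists
      have hfa : f ↑(Es^[n] a) = γp := by
        have hnot : Es^[n] a ∉ V := fun hmem => haV ((hEsiterV n a).mp hmem)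
        simpa [hV, Set.mem_setOf_eq, not_not] using hnot
      have hγsm : γ.symm γm = γm := by
        conv_lhs => rw [← hγm]
        exact γ.symm_apply_apply γm
      have hfx0 : ∀ j : ℕ, f ↑(Es^[j] x0) = γm := by
        intro j
        induction j with
        | zero => simpa [hx0] using hq
        | succ j ih =>
          rw [Function.iterate_succ_apply', hproj_Es, hfsymm, ih, hγsm]
      have hdist : dist (↑(Es^[n] x0) : AddCircle (1:ℝ)) ↑(Es^[n] a) ≤ ℓ n := by
        have h1 : u n < Es^[n] x0 := (hEsmono.iterate n) hx0ab.1
        have h2 : Es^[n] x0 < v n := (hEsmono.iterate n) hx0ab.2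
        refine (dist_coe_le _ _).trans ?_
        rw [abs_of_nonneg (by simp only [hu] at h1; linarith)]
        simp only [hℓ, hu, hv] at *
        linarith
      have hcontr := hδ2p (lt_of_le_of_lt hdist hn)
      rw [hfx0 n, hfa] at hcontr
      exact absurd hcontr (lt_irrefl _)
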